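/- Let 𝔤 be a finite-dimensional semisimple Lie algebra over ℂ with Killing form κ, and let 𝔞 ⊆ 𝔤 be a Cartan subalgebra (so that κ restricted to 𝔞 is nondegenerate). Let α, δ : 𝔞 → ℂ be linear functionals and let H_α, H_δ ∈ 𝔞 be their κ-duals, i.e. κ(H_α, h) = α(h) and κ(H_δ, h) = δ(h) for all h ∈ 𝔞. Let 𝔭 ⊆ 𝔤 be a Lie subalgebra containing the generalized weight space 𝔤_α, and let 𝔥 be an ideal of 𝔭 with H_δ ∈ 𝔥. If δ(H_α) ≠ 0, then 𝔤_α ⊆ 𝔥. -/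
import Mathlib


/-- The generalized weight space of a linear functional `α` on a Lie subalgebra `𝔞`
acting on `𝔤` via the adjoint representation. -/
def genWeightSet {𝔤 : Type*} [LieRing 𝔤] [LieAlgebra ℂ 𝔤]
    (𝔞 : LieSubalgebra ℂ 𝔤) (α : 𝔞 → ℂ) : Set 𝔤 :=
  {x : 𝔤 | ∀ h : 𝔞, ∃ k : ℕ,
    ((LieAlgebra.ad ℂ 𝔤 (h : 𝔤) - α h • (1 : Module.End ℂ 𝔤)) ^ k) x = 0}

/-- Let `𝔤` be a finite-dimensional complex semisimple Lie algebra with Killing form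
`κ`, `𝔞` a Cartan subalgebra, `α, δ` linear functionals on `𝔞` with `κ`-duals
`Hα, Hδ ∈ 𝔞`.  If `𝔭` is a subalgebra containing the weight space `𝔤_α`, `𝔥` an ideal
of `𝔭` containing `Hδ`, and `δ (Hα) ≠ 0`, then `𝔤_α ⊆ 𝔥`. -/
theorem genWeightSet_subset_ideal_of_distortion_ne_zero
    {𝔤 : Type*} [LieRing 𝔤] [LieAlgebra ℂ 𝔤] [FiniteDimensional ℂ 𝔤]
    [LieAlgebra.IsSemisimple ℂ 𝔤]
    (𝔞 : LieSubalgebra ℂ 𝔤) [𝔞.IsCartanSubalgebra]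
    (α δ : 𝔞 →ₗ[ℂ] ℂ) (Hα Hδ : 𝔞)
    (hHα : ∀ h : 𝔞, killingForm ℂ 𝔤 (Hα : 𝔤) (h : 𝔤) = α h)
    (hHδ : ∀ h : 𝔞, killingForm ℂ 𝔤 (Hδ : 𝔤) (h : 𝔤) = δ h)
    (𝔭 : LieSubalgebra ℂ 𝔤)
    (hsub : genWeightSet 𝔞 α ⊆ (𝔭 : Set 𝔤))
    (𝔥 : LieSubalgebra ℂ 𝔤) (h𝔥𝔭 : 𝔥 ≤ 𝔭)
    (hideal : ∀ p ∈ 𝔭, ∀ x ∈ 𝔥, ⁅p, x⁆ ∈ 𝔥)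
    (hHδ𝔥 : (Hδ : 𝔤) ∈ 𝔥)
    (hδHα : δ Hα ≠ 0) :
    genWeightSet 𝔞 α ⊆ (𝔥 : Set 𝔤) := by
  have hc : α Hδ ≠ 0 := by
    rw [← hHα Hδ, LieModule.traceForm_comm, hHδ Hα]
    exact hδHα
  intro x hx
  obtain ⟨k, hk⟩ := hx Hδ
  set c := α Hδ with hcdef
  set T := LieAlgebra.ad ℂ 𝔤 (Hδ : 𝔤) with hT
  set S := T - c • (1 : Module.End ℂ 𝔤) with hS
  have key : ∀ n : ℕ, ∀ y : 𝔤, y ∈ 𝔭 → (S ^ n) y = 0 → y ∈ 𝔥 := by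
    intro n
    induction n with
    | zero =>
      intro y hy h0
      simp only [pow_zero, Module.End.one_apply] at h0
      rw [h0]; exact 𝔥.zero_mem
    | succ m ih =>
      intro y hy h0
      have hTy : T y ∈ 𝔥 := by
        have h1 : ⁅y, (Hδ : 𝔤)⁆ ∈ 𝔥 := hideal y hy (Hδ : 𝔤) hHδ𝔥
        have h2 : -⁅y, (Hδ : 𝔤)⁆ ∈ 𝔥 := 𝔥.neg_mem h1
        have h3 : T y = -⁅y, (Hδ : 𝔤)⁆ := by
          rw [hT, LieAlgebra.ad_apply, ← lie_skew]
        rw [h3]; exact h2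
      have hSyval : S y = T y - c • y := by
        rw [hS]
        simp [LinearMap.sub_apply]
      have hSy𝔭 : S y ∈ 𝔭 := by
        rw [hSyval]
        exact 𝔭.sub_mem (h𝔥𝔭 hTy) (𝔭.smul_mem c hy)
      have hSn : (S ^ m) (S y) = 0 := by
        rw [← Module.End.mul_apply, ← pow_succ]
        exact h0
      have hSy𝔥 : S y ∈ 𝔥 := ih (S y) hSy𝔭 hSn
      have hcy : c • y ∈ 𝔥 := by
        have : c • y = T y - S y := by rw [hSyval]; abel
        rw [this]; exact 𝔥.sub_mem hTy hSy𝔥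
      have := 𝔥.smul_mem c⁻¹ hcy
      simpa [smul_smul, inv_mul_cancel₀ hc] using this
  exact key k x (hsub hx) hk
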